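/- Let K ≤ H be finite groups and let K act on a finite set A with |A| ≤ [H : K]. Then there exists a free, transitive action of H on a finite set B together with a K-equivariant surjection B → A. -/

import Mathlib

/-- If `K ≤ H` are finite groups and `K` acts on a finite set `A` with `|A| ≤ [H : K]`,
then there is a free transitive `H`-action on a finite set `B` together with a
`K`-equivariant surjection `B → A`. -/
theorem extend_action_free_transitive {H : Type} [Group H] [Fintype H] (K : Subgroup H)
    (A : Type) [Fintype A] [MulAction K A] (hA : Fintype.card A ≤ K.index) :
    ∃ (B : Type) (_ : Fintype B) (ρ : H →* Equiv.Perm B) (π : B → A),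
      Function.Surjective π ∧
      (∀ (h : H) (b : B), ρ h b = b → h = 1) ∧
      (∀ b₁ b₂ : B, ∃ h : H, ρ h b₁ = b₂) ∧
      (∀ (k : K) (b : B), π (ρ (k : H) b) = k • π b) := by
  rcases isEmpty_or_nonempty A with hE | hN
  · refine ⟨Empty, inferInstance, 1, fun b => b.elim, ?_, ?_, ?_, ?_⟩
    · intro a; exact (hE.false a).elim
    · intro h b; exact b.elim
    · intro b; exact b.elim
    · intro k b; exact b.elim
  · -- q : H → H ⧸ K, invariant under left multiplication by K
    let q : H → H ⧸ K := fun b => QuotientGroup.mk b⁻¹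
    have hq : ∀ (k : K) (b : H), q ((k : H) * b) = q b := by
      intro k b
      show (QuotientGroup.mk ((k : H) * b)⁻¹ : H ⧸ K) = QuotientGroup.mk b⁻¹
      rw [QuotientGroup.eq]
      simpa using k.2
    -- the K-part of b
    have hk : ∀ b : H, b * (q b).out ∈ K := by
      intro b
      have h1 : (QuotientGroup.mk b⁻¹ : H ⧸ K) = QuotientGroup.mk (q b).out :=
        (Quotient.out_eq (q b)).symm
      have h2 := QuotientGroup.eq.mp h1
      simpa using h2
    -- get a surjection f : H ⧸ K → A
    haveI : Fintype (H ⧸ K) := Fintype.ofFinite _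
    have hcard : Fintype.card A ≤ Fintype.card (H ⧸ K) := by
      rwa [Subgroup.index_eq_card, Nat.card_eq_fintype_card] at hA
    obtain ⟨g⟩ := Function.Embedding.nonempty_iff_card_le.mpr hcard
    let f : H ⧸ K → A := Function.invFun g
    have hf : ∀ a, f (g a) = a := Function.leftInverse_invFun g.injective
    let π : H → A := fun b => (⟨b * (q b).out, hk b⟩ : K) • f (q b)
    refine ⟨H, inferInstance, MulAction.toPermHom H H, π, ?_, ?_, ?_, ?_⟩
    · intro a
      refine ⟨(Quotient.out (g a))⁻¹, ?_⟩
      have hqb : q (Quotient.out (g a))⁻¹ = g a := by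
        show QuotientGroup.mk _ = _
        simp [Quotient.out_eq]
      show (⟨_, hk _⟩ : K) • f (q (Quotient.out (g a))⁻¹) = a
      have hone : (⟨(Quotient.out (g a))⁻¹ * (q (Quotient.out (g a))⁻¹).out,
          hk _⟩ : K) = 1 := by
        ext
        simp [hqb]
      rw [hone, hqb, one_smul, hf]
    · intro h b hb
      have : h * b = b := hb
      exact mul_eq_right.mp this
    · intro b₁ b₂
      exact ⟨b₂ * b₁⁻¹, by simp [MulAction.toPermHom]⟩
    · intro k b
      have hact : (MulAction.toPermHom H H) (k : H) b = (k : H) * b := rfl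
      rw [hact]
      show (⟨(k : H) * b * (q ((k : H) * b)).out, hk _⟩ : K) • f (q ((k : H) * b))
        = k • ((⟨b * (q b).out, hk b⟩ : K) • f (q b))
      have hout : (q ((k : H) * b)).out = (q b).out := by rw [hq]
      have e1 : (⟨(k : H) * b * (q ((k : H) * b)).out, hk _⟩ : K)
          = k * ⟨b * (q b).out, hk b⟩ := Subtype.ext (by simp [hout, mul_assoc])
      have e2 : f (q ((k : H) * b)) = f (q b) := by rw [hq]
      rw [e2, e1, mul_smul]
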